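/- For all r ≥ 0, j ≥ 1, and n ≥ 1, p^r_j(n) = p^r_{j−1}(n) + ∑_{s=0}^{n−1} C(n,s) · p^r_{j−1}(s) · J^0_{n−s}, where p^r_j(n) := ∑_{s=0}^{n} C(n,s) · J^{j−1}_s · r^{n−s} for j ≥ 1 and p^r_0(n) := r^n. -/

import Mathlib

/-- Stirling numbers of the second kind. -/
def stirling : ℕ → ℕ → ℕ
  | 0, 0 => 1
  | 0, _ + 1 => 0
  | _ + 1, 0 => 0
  | n + 1, s + 1 => (s + 1) * stirling n (s + 1) + stirling n s

/-- `J k n`: the number of barred preferential arrangements of an `n`-set with `k` bars,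
given by its closed form `∑ S(n,s)·s!·C(k+s,s)`. -/
def J (k n : ℕ) : ℕ :=
  ∑ s ∈ Finset.range (n + 1), stirling n s * s.factorial * (k + s).choose s

/-- `P r j n`: barred preferential arrangements of an `n`-set with `r + j - 1` bars,
with `r` restricted sections and `j` free sections. -/
def P (r : ℕ) : ℕ → ℕ → ℕ
  | 0, n => r ^ n
  | j + 1, n => ∑ s ∈ Finset.range (n + 1), n.choose s * J j s * r ^ (n - s)

lemma stirling_zero_succ (s : ℕ) : stirling 0 (s+1) = 0 := rfl
lemma stirling_succ_zero (n : ℕ) : stirling (n+1) 0 = 0 := rfl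
lemma stirling_succ_succ (n s : ℕ) :
    stirling (n+1) (s+1) = (s + 1) * stirling n (s + 1) + stirling n s := rfl

lemma stirling_eq_zero_of_lt : ∀ {n s : ℕ}, n < s → stirling n s = 0 := by
  intro n
  induction n with
  | zero => intro s h; cases s with
    | zero => omega
    | succ s => rfl
  | succ n ih =>
    intro s h
    cases s with
    | zero => omega
    | succ s =>
      rw [stirling_succ_succ, ih (by omega), ih (by omega)]; simp

lemma sum_choose_succ_mul_nat (f : ℕ → ℕ → ℕ) (n : ℕ) :
    (∑ i ∈ Finset.range (n + 2), ((n + 1).choose i) * f i (n + 1 - i)) =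
      (∑ i ∈ Finset.range (n + 1), (n.choose i) * f i (n + 1 - i)) +
        ∑ i ∈ Finset.range (n + 1), (n.choose i) * f (i + 1) (n - i) := by
  simpa using Finset.sum_choose_succ_mul (R := ℕ) f n

-- ∑ C(n,m) S(m,a) S(n-m,b) = C(a+b,a) S(n,a+b)
lemma stirling_conv : ∀ n a b : ℕ, ∑ m ∈ Finset.range (n+1),
      n.choose m * (stirling m a * stirling (n-m) b)
    = (a+b).choose a * stirling n (a+b) := by
  intro n
  induction n with
  | zero =>
    intro a b
    cases a <;> cases b <;> simp [stirling, stirling_zero_succ]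
  | succ n ih =>
    intro a b
    cases a with
    | zero =>
      -- only m = 0 contributes
      rw [Finset.sum_eq_single 0]
      · simp [stirling]
      · intro m hm hm0
        cases m with
        | zero => omega
        | succ m => simp [stirling_succ_zero]
      · intro h; simp at h
    | succ a =>
      cases b with
      | zero =>
        rw [Finset.sum_eq_single (n+1)]
        · simp [stirling, Nat.choose_symm_add]
        · intro m hm hm0
          have : n + 1 - m = (n - m) + 1 := by
            simp at hm; omega
          rw [this, stirling_succ_zero]; ring
        · intro h; simp at h
      | succ b =>
        rw [show n + 1 + 1 = n + 2 from rfl, sum_choose_succ_mul_nat (fun i j => stirling i (a+1) * stirling j (b+1)) n]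
        have e1 : ∑ m ∈ Finset.range (n+1),
            n.choose m * (stirling m (a+1) * stirling (n+1-m) (b+1))
            = (b+1) * ((a+1+(b+1)).choose (a+1) * stirling n (a+1+(b+1)))
              + (a+1+b).choose (a+1) * stirling n (a+1+b) := by
          rw [← ih (a+1) (b+1), ← ih (a+1) b, Finset.mul_sum, ← Finset.sum_add_distrib]
          apply Finset.sum_congr rfl
          intro m hm
          simp only [Finset.mem_range] at hm
          have : n + 1 - m = (n - m) + 1 := by omega
          rw [this, stirling_succ_succ]
          ring
        have e2 : ∑ m ∈ Finset.range (n+1),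
            n.choose m * (stirling (m+1) (a+1) * stirling (n-m) (b+1))
            = (a+1) * ((a+1+(b+1)).choose (a+1) * stirling n (a+1+(b+1)))
              + (a+(b+1)).choose a * stirling n (a+(b+1)) := by
          rw [← ih (a+1) (b+1), ← ih a (b+1), Finset.mul_sum, ← Finset.sum_add_distrib]
          apply Finset.sum_congr rfl
          intro m hm
          rw [stirling_succ_succ]
          ring
        have hsplit : (a+b+1+1).choose (a+1) = (a+b+1).choose a + (a+b+1).choose (a+1) :=
          Nat.choose_succ_succ' (a+b+1) a
        rw [e1, e2, show a+1+(b+1) = a+b+1+1 by ring, show a+1+b = a+b+1 by ring,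
          show a+(b+1) = a+b+1 by ring, show (n:ℕ)+1 = n+1 from rfl,
          stirling_succ_succ n (a+b+1), hsplit]
        ring


lemma hockey (k c : ℕ) : ∑ a ∈ Finset.range (c+1), (k+a).choose a = (k+1+c).choose c := by
  have h : ∀ a : ℕ, (k+a).choose a = (a+k).choose k := by
    intro a; rw [Nat.add_comm k a, Nat.choose_symm_add]
  simp only [h]
  rw [Nat.sum_range_add_choose c k, show c + k + 1 = (k+1) + c by ring, Nat.choose_symm_add]

-- J closed form with extended range
lemma J_ext (k m N : ℕ) (h : m ≤ N) :
    J k m = ∑ a ∈ Finset.range (N + 1), stirling m a * a.factorial * (k + a).choose a := by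
  rw [J]
  apply Finset.sum_subset
  · intro x hx; simp at hx ⊢; omega
  · intro x _ hx
    simp only [Finset.mem_range, not_lt] at hx
    rw [stirling_eq_zero_of_lt (by omega)]
    simp

lemma J_conv (k n : ℕ) :
    J (k+1) n = ∑ m ∈ Finset.range (n+1), n.choose m * J k m * J 0 (n-m) := by
  have rhs : ∑ m ∈ Finset.range (n+1), n.choose m * J k m * J 0 (n-m)
      = ∑ a ∈ Finset.range (n+1), ∑ b ∈ Finset.range (n+1),
          (k+a).choose a * ((a+b).factorial * stirling n (a+b)) := by
    have step1 : ∀ m ∈ Finset.range (n+1), n.choose m * J k m * J 0 (n-m)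
        = ∑ a ∈ Finset.range (n+1), ∑ b ∈ Finset.range (n+1),
            (k+a).choose a * (a.factorial * b.factorial *
              (n.choose m * (stirling m a * stirling (n-m) b))) := by
      intro m hm
      simp only [Finset.mem_range] at hm
      rw [J_ext k m n (by omega), J_ext 0 (n-m) n (by omega)]
      rw [mul_assoc, Finset.sum_mul_sum, Finset.mul_sum]
      apply Finset.sum_congr rfl
      intro a _
      rw [Finset.mul_sum]
      apply Finset.sum_congr rfl
      intro b _
      simp only [Nat.zero_add, Nat.choose_self, mul_one]
      ring
    rw [Finset.sum_congr rfl step1]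
    rw [Finset.sum_comm]
    apply Finset.sum_congr rfl
    intro a _
    rw [Finset.sum_comm]
    apply Finset.sum_congr rfl
    intro b _
    rw [← Finset.mul_sum, ← Finset.mul_sum, stirling_conv n a b]
    have h2 : a.factorial * b.factorial * ((a+b).choose a * stirling n (a+b))
        = ((a+b).choose b * a.factorial * b.factorial) * stirling n (a+b) := by
      rw [← Nat.choose_symm_add]; ring
    rw [h2, Nat.add_choose_mul_factorial_mul_factorial]
  rw [rhs, J]
  -- LHS: expand hockey stick
  have lhs : ∑ c ∈ Finset.range (n+1), stirling n c * c.factorial * (k+1+c).choose c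
      = ∑ c ∈ Finset.range (n+1), ∑ a ∈ Finset.range (c+1),
          (k+a).choose a * (c.factorial * stirling n c) := by
    apply Finset.sum_congr rfl
    intro c _
    rw [← hockey k c, mul_assoc]
    rw [show c.factorial * ∑ a ∈ Finset.range (c+1), (k+a).choose a
        = ∑ a ∈ Finset.range (c+1), c.factorial * (k+a).choose a from Finset.mul_sum _ _ _,
      Finset.mul_sum]
    apply Finset.sum_congr rfl
    intro a _
    ring
  rw [lhs]
  -- triangular swap
  rw [Finset.sum_comm' (t' := Finset.range (n+1))
    (s' := fun a => Finset.Ico a (n+1)) (by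
      intro c a
      simp only [Finset.mem_range, Finset.mem_Ico]
      omega)]
  apply Finset.sum_congr rfl
  intro a ha
  simp only [Finset.mem_range] at ha
  rw [Finset.sum_Ico_eq_sum_range]
  rw [show n + 1 - a = (n - a) + 1 by omega]
  apply Finset.sum_subset
  · intro x hx; simp at hx ⊢; omega
  · intro x hx hx'
    simp only [Finset.mem_range, not_lt] at hx'
    rw [stirling_eq_zero_of_lt (show n < a + x by omega)]
    simp

lemma J_zero_zero : J 0 0 = 1 := by simp [J, stirling]

lemma P_succ (r j n : ℕ) :
    P r (j+1) n = ∑ s ∈ Finset.range (n+1), n.choose s * P r j s * J 0 (n-s) := by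
  cases j with
  | zero =>
    show ∑ s ∈ Finset.range (n+1), n.choose s * J 0 s * r ^ (n - s)
        = ∑ s ∈ Finset.range (n+1), n.choose s * r ^ s * J 0 (n-s)
    rw [← Finset.sum_range_reflect (fun s => n.choose s * J 0 s * r ^ (n - s)) (n+1)]
    apply Finset.sum_congr rfl
    intro s hs
    simp only [Finset.mem_range] at hs
    rw [show n + 1 - 1 - s = n - s by omega, Nat.choose_symm (by omega : s ≤ n),
      show n - (n - s) = s by omega]
    ring
  | succ k =>
    show ∑ t ∈ Finset.range (n+1), n.choose t * J (k+1) t * r ^ (n - t)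
        = ∑ s ∈ Finset.range (n+1), n.choose s * P r (k+1) s * J 0 (n-s)
    have lhs1 : ∑ t ∈ Finset.range (n+1), n.choose t * J (k+1) t * r ^ (n - t)
        = ∑ t ∈ Finset.range (n+1), ∑ m ∈ Finset.range (t+1),
            n.choose t * (t.choose m * J k m * J 0 (t-m)) * r ^ (n - t) := by
      apply Finset.sum_congr rfl
      intro t _
      rw [J_conv, Finset.mul_sum, Finset.sum_mul]
    have rhs1 : ∑ s ∈ Finset.range (n+1), n.choose s * P r (k+1) s * J 0 (n-s)
        = ∑ s ∈ Finset.range (n+1), ∑ m ∈ Finset.range (s+1),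
            n.choose s * (s.choose m * J k m * r ^ (s-m)) * J 0 (n-s) := by
      apply Finset.sum_congr rfl
      intro s _
      show n.choose s * (∑ m ∈ Finset.range (s+1), s.choose m * J k m * r ^ (s-m)) * J 0 (n-s) = _
      rw [Finset.mul_sum, Finset.sum_mul]
    rw [lhs1, rhs1]
    have swap : ∀ F : ℕ → ℕ → ℕ,
        ∑ t ∈ Finset.range (n+1), ∑ m ∈ Finset.range (t+1), F t m
        = ∑ m ∈ Finset.range (n+1), ∑ x ∈ Finset.range (n+1-m), F (m+x) m := by
      intro F
      rw [Finset.sum_comm' (t' := Finset.range (n+1)) (s' := fun m => Finset.Ico m (n+1)) (by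
        intro t m
        simp only [Finset.mem_range, Finset.mem_Ico]
        omega)]
      apply Finset.sum_congr rfl
      intro m _
      rw [Finset.sum_Ico_eq_sum_range]
    rw [swap, swap]
    apply Finset.sum_congr rfl
    intro m hm
    simp only [Finset.mem_range] at hm
    -- reflect LHS inner sum
    rw [show n + 1 - m = (n - m) + 1 by omega,
      ← Finset.sum_range_reflect (fun x =>
        n.choose (m+x) * ((m+x).choose m * J k m * J 0 (m+x-m)) * r ^ (n - (m+x))) ((n-m)+1)]
    apply Finset.sum_congr rfl
    intro x hx
    simp only [Finset.mem_range] at hx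
    rw [show (n-m) + 1 - 1 - x = n - m - x by omega]
    have h1 : m + (n - m - x) ≤ n := by omega
    have h2 : m + x ≤ n := by omega
    have key : ∀ y, m + y ≤ n → n.choose (m+y) * (m+y).choose m
        = n.choose m * (n-m).choose y := by
      intro y hy
      rw [Nat.choose_mul (by omega), show m + y - m = y by omega]
    have e1 : n.choose (m + (n-m-x)) * ((m + (n-m-x)).choose m * J k m * J 0 (m + (n-m-x) - m))
          * r ^ (n - (m + (n-m-x)))
        = (n.choose (m + (n-m-x)) * (m + (n-m-x)).choose m) * J k m * J 0 (n-m-x) * r ^ x := by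
      rw [show m + (n-m-x) - m = n-m-x by omega, show n - (m + (n-m-x)) = x by omega]
      ring
    have e2 : n.choose (m + x) * ((m+x).choose m * J k m * r ^ (m + x - m)) * J 0 (n - (m+x))
        = (n.choose (m+x) * (m+x).choose m) * J k m * J 0 (n-m-x) * r ^ x := by
      rw [show m + x - m = x by omega, show n - (m+x) = n-m-x by omega]
      ring
    rw [e1, e2, key _ h1, key _ h2, Nat.choose_symm (by omega : x ≤ n - m)]


theorem stmt_11 (r j n : ℕ) (hj : 1 ≤ j) (hn : 1 ≤ n) :
    P r j n = P r (j - 1) n +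
      ∑ s ∈ Finset.range n, n.choose s * P r (j - 1) s * J 0 (n - s) := by
  obtain ⟨j', rfl⟩ : ∃ j', j = j' + 1 := ⟨j - 1, by omega⟩
  rw [P_succ, Finset.sum_range_succ, Nat.choose_self, Nat.sub_self, J_zero_zero]
  simp [Nat.add_comm]
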